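/- Let A be an alphabet with k = #A ≥ 2, let n ≥ 1, and let ω be a word of length k^{n+1} + n over A. Then ω is a de Bruijn sequence of order n + 1 in A if and only if the path induced by ω on the de Bruijn graph G_n(A) is an Eulerian path. -/

import Mathlib

/-- A word `w` of length `L` over the alphabet `A` is a (non-cyclic) de Bruijn word of
order `m`: every word of length `m` over `A` occurs exactly once as a consecutive
substring of `w`. (This is applied with `L = k^m + m - 1` where `k = #A`.) -/
def IsDeBruijnWord {A : Type*} (m L : ℕ) (w : Fin L → A) : Prop :=
  ∀ v : Fin m → A, ∃! j : ℕ,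
    j + m ≤ L ∧ ∀ (i : Fin m) (h : j + (i : ℕ) < L), w ⟨j + (i : ℕ), h⟩ = v i

/-- The adjacency relation of the de Bruijn graph `G_n(A)`: there is an edge from `u`
to `v` iff `u (i+1) = v i` for all applicable indices (0-indexed). -/
def deBruijnAdj {A : Type*} (n : ℕ) (u v : Fin n → A) : Prop :=
  ∀ (i : ℕ) (h : i + 1 < n), u ⟨i + 1, h⟩ = v ⟨i, Nat.lt_of_succ_lt h⟩

/-- The path induced on the de Bruijn graph `G_n(A)` by a word `w` of length `ℓ ≥ n`:
the list of vertices `γ_j = w_j ⋯ w_{j+n-1}`, `j = 0, …, ℓ − n`. -/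
def inducedPath {A : Type*} (n ℓ : ℕ) (h : n ≤ ℓ) (w : Fin ℓ → A) :
    List (Fin n → A) :=
  List.ofFn (fun j : Fin (ℓ - n + 1) => fun i : Fin n =>
    w ⟨j.1 + i.1, by have hj := j.2; have hi := i.2; omega⟩)

/-- A list of vertices is an Eulerian path for the adjacency relation `adj`: its
consecutive pairs are pairwise distinct and are exactly the edges of the graph
(so each edge is traversed exactly once). -/
def IsEulerianList {V : Type*} (adj : V → V → Prop) (l : List V) : Prop :=
  (l.zip l.tail).Nodup ∧ ∀ p : V × V, p ∈ l.zip l.tail ↔ adj p.1 p.2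

theorem deBruijn_aux {A : Type*} (E n : ℕ) (hE : 1 ≤ E) (hn : 1 ≤ n)
    (w : Fin (E + n) → A) :
    IsDeBruijnWord (n + 1) (E + n) w ↔
      IsEulerianList (deBruijnAdj n)
        (inducedPath n (E + n) (Nat.le_add_left n _) w) := by
  classical
  have hL0 : 0 < E + n := by omega
  set W : ℕ → A := fun t => if h : t < E + n then w ⟨t, h⟩ else w ⟨0, hL0⟩ with hWdef
  have hW : ∀ (t : ℕ) (h : t < E + n), w ⟨t, h⟩ = W t := by
    intro t h; simp [hWdef, h]
  set vert : ℕ → Fin n → A := fun j i => W (j + i) with hvert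
  set sub : ℕ → Fin (n + 1) → A := fun j i => W (j + i) with hsub
  have hEn : E + n - n = E := by omega
  set g : Fin (E + n - n + 1) → Fin n → A :=
    fun j i => W (j.1 + i.1) with hg
  have hlg : inducedPath n (E + n) (Nat.le_add_left n _) w = List.ofFn g := by
    unfold inducedPath
    exact congrArg List.ofFn (funext fun j => funext fun i => hW _ _)
  rw [hlg]
  set l := List.ofFn g with hl
  have hlen : l.length = E + 1 := by rw [hl, List.length_ofFn]; omega
  have hzlen : (l.zip l.tail).length = E := by
    rw [List.length_zip, List.length_tail, hlen]; omega
  have hgl : ∀ (a : ℕ) (ha : a < l.length), l[a]'ha = vert a := by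
    intro a ha
    have h1 : l[a]'ha = g ⟨a, by rw [hlen] at ha; omega⟩ := List.getElem_ofFn ha
    exact h1
  have hzget : ∀ (j : ℕ) (hj : j < E),
      (l.zip l.tail)[j]'(by omega) = (vert j, vert (j + 1)) := by
    intro j hj
    rw [List.getElem_zip, List.getElem_tail, hgl, hgl]
  have hmem : ∀ p : (Fin n → A) × (Fin n → A),
      p ∈ l.zip l.tail ↔ ∃ j, j < E ∧ vert j = p.1 ∧ vert (j + 1) = p.2 := by
    intro p
    rw [List.mem_iff_getElem]
    constructor
    · rintro ⟨j, hj, hp⟩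
      have hj' : j < E := by omega
      rw [hzget j hj'] at hp
      exact ⟨j, hj', congrArg Prod.fst hp, congrArg Prod.snd hp⟩
    · rintro ⟨j, hj, h1, h2⟩
      refine ⟨j, by omega, ?_⟩
      rw [hzget j hj, h1, h2]
  have hsv : ∀ (j : ℕ) (v : Fin (n + 1) → A),
      sub j = v ↔ (vert j = fun i : Fin n => v i.castSucc) ∧
        (vert (j + 1) = fun i : Fin n => v i.succ) := by
    intro j v
    constructor
    · intro h
      constructor <;> funext i
      · exact congrFun h i.castSucc
      · refine Eq.trans ?_ (congrFun h i.succ)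
        exact congrArg W (by simp only [Fin.val_succ]; omega)
    · rintro ⟨h1, h2⟩
      funext i
      rcases lt_or_ge (i : ℕ) n with hi | hi
      · refine Eq.trans (congrFun h1 ⟨i, hi⟩) ?_
        exact congrArg v (Fin.ext rfl)
      · have hin : (i : ℕ) = n := by have := i.2; omega
        refine Eq.trans (congrArg W (by omega : j + (i : ℕ) = j + 1 + (n - 1))) ?_
        refine Eq.trans (congrFun h2 ⟨n - 1, by omega⟩) ?_
        refine congrArg v (Fin.ext ?_)
        show (n - 1) + 1 = (i : ℕ)
        omega
  have hP : ∀ (v : Fin (n + 1) → A) (j : ℕ),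
      (j + (n + 1) ≤ E + n ∧ ∀ (i : Fin (n + 1)) (h : j + (i : ℕ) < E + n),
        w ⟨j + (i : ℕ), h⟩ = v i) ↔ (j < E ∧ sub j = v) := by
    intro v j
    constructor
    · rintro ⟨h1, h2⟩
      have hj : j < E := by omega
      refine ⟨hj, funext fun i => ?_⟩
      have hi : j + (i : ℕ) < E + n := by have := i.2; omega
      exact Eq.trans (hW _ hi).symm (h2 i hi)
    · rintro ⟨hj, hs⟩
      refine ⟨by omega, fun i h => ?_⟩
      rw [hW _ h]
      exact congrFun hs i
  have hdb : IsDeBruijnWord (n + 1) (E + n) w ↔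
      ∀ v, ∃! j : ℕ, j < E ∧ sub j = v := by
    unfold IsDeBruijnWord
    exact forall_congr' fun v => existsUnique_congr (hP v)
  rw [hdb]
  constructor
  · intro hDB
    constructor
    · rw [List.nodup_iff_injective_getElem]
      rintro ⟨a, ha⟩ ⟨b, hb⟩ hab
      have ha' : a < E := by omega
      have hb' : b < E := by omega
      simp only at hab
      rw [hzget a ha', hzget b hb'] at hab
      have h1 : vert a = vert b := congrArg Prod.fst hab
      have h2 : vert (a + 1) = vert (b + 1) := congrArg Prod.snd hab
      have hseq : sub a = sub b := by
        rw [hsv a (sub b)]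
        have hb1 := (hsv b (sub b)).mp rfl
        exact ⟨h1.trans hb1.1, h2.trans hb1.2⟩
      obtain ⟨j, -, hju⟩ := hDB (sub b)
      have e1 := hju a ⟨ha', hseq⟩
      have e2 := hju b ⟨hb', rfl⟩
      apply Fin.ext
      show a = b
      omega
    · intro p
      rw [hmem p]
      constructor
      · rintro ⟨j, hj, h1, h2⟩
        intro i hi
        rw [← h1, ← h2]
        show W (j + (i + 1)) = W (j + 1 + i)
        exact congrArg W (by omega)
      · intro hadj
        set v : Fin (n + 1) → A := fun i =>
          if h : (i : ℕ) < n then p.1 ⟨i, h⟩ else p.2 ⟨n - 1, by omega⟩ with hv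
        obtain ⟨j, ⟨hj, hjs⟩, -⟩ := hDB v
        refine ⟨j, hj, ?_, ?_⟩
        · rw [((hsv j v).mp hjs).1]
          funext i
          show v i.castSucc = p.1 i
          rw [hv]
          simp only [Fin.coe_castSucc]
          rw [dif_pos i.2]
        · rw [((hsv j v).mp hjs).2]
          funext i
          show v i.succ = p.2 i
          rcases lt_or_ge ((i : ℕ) + 1) n with hi | hi
          · rw [hv]
            simp only [Fin.val_succ]
            rw [dif_pos hi]
            exact hadj i hi
          · have hi1 : (i : ℕ) + 1 = n := by have := i.2; omega
            rw [hv]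
            simp only [Fin.val_succ]
            rw [dif_neg (by omega)]
            refine congrArg p.2 (Fin.ext ?_)
            show n - 1 = (i : ℕ)
            omega
  · rintro ⟨hnd, hadj⟩
    intro v
    set u : Fin n → A := fun i => v i.castSucc with hu
    set t : Fin n → A := fun i => v i.succ with ht
    have hut : deBruijnAdj n u t := by
      intro i hi
      show v (⟨i + 1, hi⟩ : Fin n).castSucc = v (⟨i, _⟩ : Fin n).succ
      exact congrArg v (Fin.ext rfl)
    have hmem' : (u, t) ∈ l.zip l.tail := (hadj (u, t)).mpr hut
    obtain ⟨j, hj, h1, h2⟩ := (hmem (u, t)).mp hmem'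
    refine ⟨j, ⟨hj, (hsv j v).mpr ⟨h1, h2⟩⟩, ?_⟩
    rintro j' ⟨hj', hs'⟩
    have hp' := (hsv j' v).mp hs'
    have hzj : (l.zip l.tail)[j]'(by omega) = (l.zip l.tail)[j']'(by omega) := by
      rw [hzget j hj, hzget j' hj', h1, h2, hp'.1, hp'.2]
    rw [List.nodup_iff_injective_getElem] at hnd
    have := hnd (a₁ := ⟨j', by omega⟩) (a₂ := ⟨j, by omega⟩) hzj.symm
    exact congrArg Fin.val this

/-- A word `w` of length `k^(n+1) + n` over `A` (`#A = k ≥ 2`, `n ≥ 1`) is a de Bruijn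
sequence of order `n + 1` iff the path it induces on the de Bruijn graph `G_n(A)` is
an Eulerian path. -/
theorem statement11 (A : Type*) [Fintype A] (k : ℕ) (hk : k = Fintype.card A)
    (hk2 : 2 ≤ k) (n : ℕ) (hn : 1 ≤ n) (w : Fin (k ^ (n + 1) + n) → A) :
    IsDeBruijnWord (n + 1) (k ^ (n + 1) + n) w ↔
      IsEulerianList (deBruijnAdj n)
        (inducedPath n (k ^ (n + 1) + n) (Nat.le_add_left n _) w) := by
  exact deBruijn_aux (k ^ (n + 1)) n (Nat.one_le_pow _ _ (by omega)) hn w
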